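/- Fix E ∈ ℝ and n ≥ 1. Almost surely, H_{n,n} − E is invertible and ⟨φ_n, (H_{n,n} − E)^{−1} φ_n⟩ ≠ 0, and the random variable Φ_n(E) := (⟨φ_n, (H_{n,n} − E)^{−1} φ_n⟩)^{−1} has the same distribution as W^{(n)}_0, the output of the renormalization recursion applied to 2^n i.i.d. inputs distributed as V − E with V ~ ρ. In particular, the law of Φ_n(E) is absolutely continuous with density T_{p_n}···T_{p_1}ρ_E, where ρ_E(v) = ρ(v+E). -/

import Mathlib

open MeasureTheory ProbabilityTheory Matrix Filter Topology

noncomputable section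

/-- Hierarchical (ultrametric) distance on `ℕ₀ = {0,1,2,…}`:
`d(j,k) = min {r ≥ 0 | ⌊j/2^r⌋ = ⌊k/2^r⌋}`. -/
def hdist (j k : ℕ) : ℕ := sInf {r | j / 2 ^ r = k / 2 ^ r}

lemma hdist_comm (j k : ℕ) : hdist j k = hdist k j := by
  unfold hdist; congr 1; ext r; exact eq_comm

/-- Matrix entry of the hierarchical Laplacian `Δ = ∑_{r ≥ 1} p_r E_r`,
restricted to a block `B_n` (the entry only depends on the hierarchical distance):
`Δ(j,k) = ∑_{r ≥ max(1, d(j,k))} p_r · 2^{-r}`. -/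
def lapEntry (p : ℕ → ℝ) (j k : ℕ) : ℝ :=
  ∑' r : ℕ, if 1 ≤ r ∧ hdist j k ≤ r then p r / 2 ^ r else 0

/-- Matrix entry of the truncated Laplacian `∑_{r = 1}^{m} p_r E_r`. -/
def lapEntryT (p : ℕ → ℝ) (m : ℕ) (j k : ℕ) : ℝ :=
  ∑ r ∈ Finset.Icc 1 m, if hdist j k ≤ r then p r / 2 ^ r else 0

/-- The finite-volume Hamiltonian `H_n = 1_{B_n} (Δ + V) 1_{B_n}`
as a real symmetric `2^n × 2^n` matrix. -/
def Hmat (p : ℕ → ℝ) (v : ℕ → ℝ) (n : ℕ) : Matrix (Fin (2 ^ n)) (Fin (2 ^ n)) ℝ :=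
  fun j k => lapEntry p j k + if j = k then v j else 0

/-- The truncated finite-volume Hamiltonian
`H_{n,m} = 1_{B_n} (∑_{r=1}^m p_r E_r + V) 1_{B_n}`. -/
def HmatT (p : ℕ → ℝ) (v : ℕ → ℝ) (n m : ℕ) : Matrix (Fin (2 ^ n)) (Fin (2 ^ n)) ℝ :=
  fun j k => lapEntryT p m j k + if j = k then v j else 0

lemma Hmat_isHermitian (p : ℕ → ℝ) (v : ℕ → ℝ) (n : ℕ) : (Hmat p v n).IsHermitian := by
  refine Matrix.ext fun j k => ?_
  simp only [conjTranspose_apply, star_trivial, Hmat, lapEntry, hdist_comm (k : ℕ) (j : ℕ)]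
  rcases eq_or_ne j k with h | h
  · subst h; rfl
  · simp [h, h.symm]

lemma HmatT_isHermitian (p : ℕ → ℝ) (v : ℕ → ℝ) (n m : ℕ) : (HmatT p v n m).IsHermitian := by
  refine Matrix.ext fun j k => ?_
  simp only [conjTranspose_apply, star_trivial, HmatT, lapEntryT, hdist_comm (k : ℕ) (j : ℕ)]
  rcases eq_or_ne j k with h | h
  · subst h; rfl
  · simp [h, h.symm]

/-- The site `0 ∈ B_n`. -/
def fin0 (n : ℕ) : Fin (2 ^ n) := ⟨0, Nat.two_pow_pos n⟩

/-- The hierarchical renormalization recursion: `W^{(0)}_k = x_k` and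
`W^{(j+1)}_k = (1/(2 W^{(j)}_{2k}) + 1/(2 W^{(j)}_{2k+1}))⁻¹ + p_{j+1}`. -/
def renIter (p : ℕ → ℝ) : ℕ → (ℕ → ℝ) → (ℕ → ℝ)
  | 0, x => x
  | (j + 1), x => fun k =>
      (1 / (2 * renIter p j x (2 * k)) + 1 / (2 * renIter p j x (2 * k + 1)))⁻¹ + p (j + 1)

/-- Non-concentration assumption on the set `I` with exponent `δ`: the law of the `r`-fold
renormalized potential `W^{(r)}_0` (started from i.i.d. inputs `V_k - E`) is absolutely
continuous with a density `T_{p_r} ⋯ T_{p_1} ρ_E` bounded by `K · 2^{(c-δ) r}`, uniformly in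
`E ∈ I`; equivalently, `P(W^{(r)}_0 ∈ A) ≤ K · 2^{(c-δ) r} · |A|` for every Borel set `A`. -/
def NonConc {Ω : Type*} [MeasurableSpace Ω] (Pr : Measure Ω)
    (p : ℕ → ℝ) (V : ℕ → Ω → ℝ) (I : Set ℝ) (c δ : ℝ) : Prop :=
  ∃ K : ℝ, 0 ≤ K ∧ ∀ r : ℕ, 1 ≤ r → ∀ E ∈ I, ∀ A : Set ℝ, MeasurableSet A →
    Pr {ω | renIter p r (fun k => V k ω - E) 0 ∈ A} ≤
      ENNReal.ofReal (K * 2 ^ ((c - δ) * r)) * volume A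

/-- `2k ∈ B_{n+1}` for `k ∈ B_n`. -/
def dblFin {n : ℕ} (k : Fin (2 ^ n)) : Fin (2 ^ (n + 1)) :=
  ⟨2 * k, by have h := k.isLt; rw [pow_succ]; omega⟩

/-- `2k + 1 ∈ B_{n+1}` for `k ∈ B_n`. -/
def dblFin1 {n : ℕ} (k : Fin (2 ^ n)) : Fin (2 ^ (n + 1)) :=
  ⟨2 * k + 1, by have h := k.isLt; rw [pow_succ]; omega⟩

/-- Hopping sequence `(p_{r+1})_{r ≥ 1}` of the renormalized model. -/
def shiftSeq (p : ℕ → ℝ) : ℕ → ℝ := fun r => p (r + 1)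

/-- The renormalized potential `(RV)_k = 2 V_{2k} V_{2k+1}/(V_{2k} + V_{2k+1}) + p_1`. -/
def renPotM (p : ℕ → ℝ) (v : ℕ → ℝ) : ℕ → ℝ :=
  fun k => 2 * v (2 * k) * v (2 * k + 1) / (v (2 * k) + v (2 * k + 1)) + p 1

/-- The renormalized potential `(RV)_k = (1/(2 V_{2k}) + 1/(2 V_{2k+1}))⁻¹ + p_1`. -/
def renPotH (p : ℕ → ℝ) (v : ℕ → ℝ) : ℕ → ℝ :=
  fun k => (1 / (2 * v (2 * k)) + 1 / (2 * v (2 * k + 1)))⁻¹ + p 1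

/-- The isometry `U_e : ℓ²(B_n) → ℓ²(B_{n+1})`, `U_e δ_k = (δ_{2k} + δ_{2k+1})/√2`,
as a `2^{n+1} × 2^n` matrix. -/
def Uemat (n : ℕ) : Matrix (Fin (2 ^ (n + 1))) (Fin (2 ^ n)) ℝ :=
  fun j k => if (j : ℕ) = 2 * k then (Real.sqrt 2)⁻¹
    else if (j : ℕ) = 2 * k + 1 then (Real.sqrt 2)⁻¹ else 0

/-- The isometry `U_f : ℓ²(B_n) → ℓ²(B_{n+1})`, `U_f δ_k = (δ_{2k} - δ_{2k+1})/√2`,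
as a `2^{n+1} × 2^n` matrix. -/
def Ufmat (n : ℕ) : Matrix (Fin (2 ^ (n + 1))) (Fin (2 ^ n)) ℝ :=
  fun j k => if (j : ℕ) = 2 * k then (Real.sqrt 2)⁻¹
    else if (j : ℕ) = 2 * k + 1 then -(Real.sqrt 2)⁻¹ else 0

/-- The unitary `U = U_e ⊕ U_f : ℓ²(B_n) ⊕ ℓ²(B_n) → ℓ²(B_{n+1})`. -/
def Umat (n : ℕ) : Matrix (Fin (2 ^ (n + 1))) (Fin (2 ^ n) ⊕ Fin (2 ^ n)) ℝ :=
  Matrix.fromCols (Uemat n) (Ufmat n)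

/-- `V_ff = V_ee`: multiplication by `(V_{2k} + V_{2k+1})/2` on `ℓ²(B_n)`. -/
def Vffmat (v : ℕ → ℝ) (n : ℕ) : Matrix (Fin (2 ^ n)) (Fin (2 ^ n)) ℝ :=
  Matrix.diagonal fun k => (v (2 * k) + v (2 * k + 1)) / 2

/-- `V_fe = V_ef`: multiplication by `(V_{2k} - V_{2k+1})/2` on `ℓ²(B_n)`. -/
def Vfemat (v : ℕ → ℝ) (n : ℕ) : Matrix (Fin (2 ^ n)) (Fin (2 ^ n)) ℝ :=
  Matrix.diagonal fun k => (v (2 * k) - v (2 * k + 1)) / 2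

/-- The operator `S = U_e^* - V_fe V_ff^{-1} U_f^* : ℓ²(B_{n+1}) → ℓ²(B_n)`. -/
def Smat (v : ℕ → ℝ) (n : ℕ) : Matrix (Fin (2 ^ n)) (Fin (2 ^ (n + 1))) ℝ :=
  (Uemat n)ᵀ - Vfemat v n * (Vffmat v n)⁻¹ * (Ufmat n)ᵀ

/-- The maximally delocalized vector `φ_n = 2^{-n/2} 1_{B_n}`. -/
def phiVec (n : ℕ) : Fin (2 ^ n) → ℝ := fun _ => (Real.sqrt (2 ^ n))⁻¹

end


/-! ### Auxiliary lemmas for the proof -/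

section AuxiliaryLemmas

lemma hdiv_step' (j s : ℕ) (hs : s < 2) (r : ℕ) :
    (2 * j + s) / 2 ^ (r + 1) = j / 2 ^ r := by
  have h : (2 * j + s) / 2 = j := by omega
  rw [pow_succ', ← Nat.div_div_eq_div_mul, h]

lemma div_pow_upward' {j k r r' : ℕ} (hr : r ≤ r') (h : j / 2 ^ r = k / 2 ^ r) :
    j / 2 ^ r' = k / 2 ^ r' := by
  induction r', hr using Nat.le_induction with
  | base => exact h
  | succ m hm ih =>
    rw [pow_succ, ← Nat.div_div_eq_div_mul, ← Nat.div_div_eq_div_mul, ih]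

lemma hdist_set_nonempty' (j k : ℕ) : {r | j / 2 ^ r = k / 2 ^ r}.Nonempty := by
  refine ⟨j + k, ?_⟩
  have hj : j < 2 ^ (j + k) :=
    lt_of_lt_of_le (Nat.lt_two_pow_self (n := j)) (Nat.pow_le_pow_right (by norm_num) (by omega))
  have hk : k < 2 ^ (j + k) :=
    lt_of_lt_of_le (Nat.lt_two_pow_self (n := k)) (Nat.pow_le_pow_right (by norm_num) (by omega))
  simp [Set.mem_setOf_eq, Nat.div_eq_of_lt hj, Nat.div_eq_of_lt hk]

lemma hdist_le_iff' {j k r : ℕ} : hdist j k ≤ r ↔ j / 2 ^ r = k / 2 ^ r := by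
  constructor
  · intro h
    exact div_pow_upward' h (Nat.sInf_mem (hdist_set_nonempty' j k))
  · exact fun h => Nat.sInf_le h

lemma lapEntryT_range' (p : ℕ → ℝ) (m a b : ℕ) :
    lapEntryT p m a b
      = ∑ i ∈ Finset.range m, if hdist a b ≤ i + 1 then p (i+1) / 2 ^ (i+1) else 0 := by
  unfold lapEntryT
  rw [← Finset.Ico_add_one_right_eq_Icc, Finset.sum_Ico_eq_sum_range]
  simp [Nat.add_comm 1]

lemma lapEntryT_pair' (p : ℕ → ℝ) (m j k s t : ℕ) (hs : s < 2) (ht : t < 2) :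
    lapEntryT p (m + 1) (2*j+s) (2*k+t) =
      (if j = k then p 1 / 2 else 0) + lapEntryT (shiftSeq p) m j k / 2 := by
  rw [lapEntryT_range', lapEntryT_range']
  have hc : ∀ i : ℕ, (hdist (2*j+s) (2*k+t) ≤ i + 1) ↔ hdist j k ≤ i := by
    intro i
    rw [hdist_le_iff', hdist_le_iff', hdiv_step' j s hs, hdiv_step' k t ht]
  rw [Finset.sum_range_succ']
  have h0 : (hdist (2*j+s) (2*k+t) ≤ 0 + 1) ↔ j = k := by
    rw [hc 0, hdist_le_iff']; simp
  rw [add_comm]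
  congr 1
  · simp only [h0]; norm_num
  · rw [Finset.sum_div]
    refine Finset.sum_congr rfl fun i _ => ?_
    simp only [hc (i+1)]
    by_cases h : hdist j k ≤ i + 1 <;> simp [h, shiftSeq, pow_succ] <;> ring

lemma renIter_shift' (p : ℕ → ℝ) : ∀ (j : ℕ) (x : ℕ → ℝ) (k : ℕ),
    renIter p j x k = renIter p j (fun i => x (k * 2 ^ j + i)) 0 := by
  intro j
  induction j with
  | zero => intro x k; simp [renIter]
  | succ j ih =>
    intro x k
    show (1 / (2 * renIter p j x (2*k)) + 1 / (2 * renIter p j x (2*k+1)))⁻¹ + p (j+1) = _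
    rw [ih x (2*k), ih x (2*k+1)]
    show _ = (1 / (2 * renIter p j (fun i => x (k*2^(j+1)+i)) 0)
        + 1 / (2 * renIter p j (fun i => x (k*2^(j+1)+i)) 1))⁻¹ + p (j+1)
    rw [ih (fun i => x (k*2^(j+1)+i)) 0, ih (fun i => x (k*2^(j+1)+i)) 1]
    have e1 : (fun i => x (2*k*2^j + i)) = fun i => x (k*2^(j+1) + (0*2^j + i)) := by
      funext i; congr 1; ring
    have e2 : (fun i => x ((2*k+1)*2^j + i)) = fun i => x (k*2^(j+1) + (1*2^j + i)) := by
      funext i; congr 1; ring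
    rw [e1, e2]

lemma renIter_congr0' (p : ℕ → ℝ) : ∀ (j : ℕ) (x y : ℕ → ℝ),
    (∀ i, i < 2 ^ j → x i = y i) → renIter p j x 0 = renIter p j y 0 := by
  intro j
  induction j with
  | zero => intro x y h; exact h 0 (by norm_num)
  | succ j ih =>
    intro x y h
    have hp : (2:ℕ) ^ (j+1) = 2 ^ j * 2 := pow_succ 2 j
    show (1 / (2 * renIter p j x 0) + 1 / (2 * renIter p j x 1))⁻¹ + p (j+1)
       = (1 / (2 * renIter p j y 0) + 1 / (2 * renIter p j y 1))⁻¹ + p (j+1)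
    rw [renIter_shift' p j x 1, renIter_shift' p j y 1]
    rw [ih x y (fun i hi => h i (by omega)),
        ih (fun i => x (1*2^j + i)) (fun i => y (1*2^j + i)) (fun i hi => h _ (by omega))]

lemma renIter_level' (p : ℕ → ℝ) : ∀ (j : ℕ) (x : ℕ → ℝ) (k : ℕ),
    renIter p (j+1) x k = renIter (shiftSeq p) j (renPotH p x) k := by
  intro j
  induction j with
  | zero => intro x k; rfl
  | succ j ih =>
    intro x k
    show (1 / (2 * renIter p (j+1) x (2*k)) + 1 / (2 * renIter p (j+1) x (2*k+1)))⁻¹ + p (j+2) = _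
    rw [ih x (2*k), ih x (2*k+1)]
    rfl

lemma renIter_measurable' (p : ℕ → ℝ) : ∀ (j k : ℕ),
    Measurable (fun x : ℕ → ℝ => renIter p j x k) := by
  intro j
  induction j with
  | zero => intro k; exact measurable_pi_apply k
  | succ j ih =>
    intro k
    show Measurable fun x : ℕ → ℝ =>
      (1 / (2 * renIter p j x (2*k)) + 1 / (2 * renIter p j x (2*k+1)))⁻¹ + p (j+1)
    exact ((((measurable_const.mul (ih (2*k))).const_div 1).add
      ((measurable_const.mul (ih (2*k+1))).const_div 1)).inv).add_const _

/-- Genericity condition making the whole renormalization recursion non-degenerate. -/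
def PredGood (p : ℕ → ℝ) (n : ℕ) (x : ℕ → ℝ) : Prop :=
  (∀ j k : ℕ, j < n → 2*k+1 < 2^(n-j) →
      renIter p j x (2*k) ≠ 0 ∧ renIter p j x (2*k+1) ≠ 0 ∧
      renIter p j x (2*k) + renIter p j x (2*k+1) ≠ 0) ∧
    renIter p n x 0 ≠ 0

/-- The pairing equivalence `B_n × {0,1} ≃ B_{n+1}`, `(k, t) ↦ 2k + t`. -/
def pairE (N : ℕ) : Fin (2^N) × Fin 2 ≃ Fin (2^(N+1)) where
  toFun x := ⟨2 * x.1 + x.2, by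
    have h1 := x.1.isLt; have h2 := x.2.isLt; have h3 := pow_succ 2 N; omega⟩
  invFun m := (⟨(m:ℕ)/2, by have := m.isLt; have h3 := pow_succ 2 N; omega⟩,
    ⟨(m:ℕ)%2, by omega⟩)
  left_inv := by
    rintro ⟨k, t⟩
    have ht := t.isLt
    refine Prod.ext ?_ ?_ <;> apply Fin.ext <;> simp <;> omega
  right_inv := by
    intro m
    apply Fin.ext
    simp
    omega

lemma sum_pairE (N : ℕ) (f : Fin (2^(N+1)) → ℝ) :
    ∑ m, f m = ∑ k : Fin (2^N), (f (pairE N (k,0)) + f (pairE N (k,1))) := by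
  rw [← Equiv.sum_comp (pairE N) f, Fintype.sum_prod_type]
  refine Finset.sum_congr rfl fun k _ => ?_
  rw [Fin.sum_univ_two]

end AuxiliaryLemmas


section KeyLemma

lemma pairE_val (N : ℕ) (k : Fin (2^N)) (t : Fin 2) :
    ((pairE N (k, t) : Fin (2^(N+1))) : ℕ) = 2 * (k:ℕ) + (t:ℕ) := rfl

lemma mulVec_pair (p v : ℕ → ℝ) (n : ℕ) (x : Fin (2^(n+1)) → ℝ) (j : Fin (2^n)) (s : Fin 2) :
    (HmatT p v (n+1) (n+1)).mulVec x (pairE n (j, s)) =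
      p 1 / 2 * (x (pairE n (j,0)) + x (pairE n (j,1)))
      + (∑ k : Fin (2^n),
          lapEntryT (shiftSeq p) n j k * (x (pairE n (k,0)) + x (pairE n (k,1)))) / 2
      + v ((pairE n (j,s) : Fin (2^(n+1))) : ℕ) * x (pairE n (j, s)) := by
  have hs2 : ((s:ℕ)) < 2 := s.isLt
  have hmv : (HmatT p v (n+1) (n+1)).mulVec x (pairE n (j, s))
      = ∑ m, HmatT p v (n+1) (n+1) (pairE n (j,s)) m * x m := by
    simp [Matrix.mulVec, dotProduct]
  rw [hmv, sum_pairE]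
  have key : ∀ k : Fin (2^n),
      HmatT p v (n+1) (n+1) (pairE n (j,s)) (pairE n (k,0)) * x (pairE n (k,0))
      + HmatT p v (n+1) (n+1) (pairE n (j,s)) (pairE n (k,1)) * x (pairE n (k,1)) =
      (if j = k then p 1 / 2 * (x (pairE n (k,0)) + x (pairE n (k,1))) else 0)
      + lapEntryT (shiftSeq p) n j k * (x (pairE n (k,0)) + x (pairE n (k,1))) / 2
      + (if j = k then v ((pairE n (j,s) : Fin (2^(n+1))) : ℕ) * x (pairE n (j, s)) else 0) := by
    intro k
    have e0 : HmatT p v (n+1) (n+1) (pairE n (j,s)) (pairE n (k,0))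
        = lapEntryT p (n+1) (2*(j:ℕ)+(s:ℕ)) (2*(k:ℕ)+0)
          + (if pairE n (j,s) = pairE n (k,0) then v (2*(j:ℕ)+(s:ℕ)) else 0) := rfl
    have e1 : HmatT p v (n+1) (n+1) (pairE n (j,s)) (pairE n (k,1))
        = lapEntryT p (n+1) (2*(j:ℕ)+(s:ℕ)) (2*(k:ℕ)+1)
          + (if pairE n (j,s) = pairE n (k,1) then v (2*(j:ℕ)+(s:ℕ)) else 0) := rfl
    rw [e0, e1, lapEntryT_pair' p n (j:ℕ) (k:ℕ) (s:ℕ) 0 hs2 (by norm_num),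
      lapEntryT_pair' p n (j:ℕ) (k:ℕ) (s:ℕ) 1 hs2 (by norm_num)]
    have hvq : ∀ t : Fin 2, (pairE n (j,s) = pairE n (k,t)) ↔ (j = k ∧ s = t) := by
      intro t
      rw [Equiv.apply_eq_iff_eq, Prod.mk.injEq]
    have hjk : ((j:ℕ) = (k:ℕ)) ↔ j = k := Fin.val_inj
    rcases eq_or_ne j k with rfl | hne
    · simp only [hjk, if_pos rfl, hvq, true_and, pairE_val]
      rcases Fin.exists_fin_two.mp ⟨s, rfl⟩ with _ | _
      · fin_cases s <;> simp <;> ring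
      · ring_nf
        fin_cases s <;> simp <;> ring
    · have h0 : ¬ (pairE n (j,s) = pairE n (k,0)) := fun h => hne ((hvq 0).1 h).1
      have h1 : ¬ (pairE n (j,s) = pairE n (k,1)) := fun h => hne ((hvq 1).1 h).1
      simp only [hjk, if_neg hne, if_neg h0, if_neg h1]
      ring
  rw [Finset.sum_congr rfl (fun k _ => key k)]
  rw [Finset.sum_add_distrib, Finset.sum_add_distrib, Finset.sum_ite_eq Finset.univ j,
    Finset.sum_ite_eq Finset.univ j, Finset.sum_div]
  simp

end KeyLemma


section KeyLemma2

lemma inv_mulVec_eq' {N : ℕ} {A : Matrix (Fin N) (Fin N) ℝ} (h : A.det ≠ 0)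
    {u b : Fin N → ℝ} (hu : A.mulVec u = b) : A⁻¹.mulVec b = u := by
  rw [← hu, Matrix.mulVec_mulVec, Matrix.nonsing_inv_mul _ (isUnit_iff_ne_zero.2 h),
    Matrix.one_mulVec]

lemma HmatT_mulVec (p v : ℕ → ℝ) (n m : ℕ) (y : Fin (2^n) → ℝ) (j : Fin (2^n)) :
    (HmatT p v n m).mulVec y j
      = (∑ k : Fin (2^n), lapEntryT p m (j:ℕ) (k:ℕ) * y k) + v (j:ℕ) * y j := by
  have h1 : (HmatT p v n m).mulVec y j
      = ∑ k : Fin (2^n), (lapEntryT p m (j:ℕ) (k:ℕ) + if j = k then v (j:ℕ) else 0) * y k := by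
    simp [Matrix.mulVec, dotProduct, HmatT]
  rw [h1]
  have h2 : ∀ k : Fin (2^n), (lapEntryT p m (j:ℕ) (k:ℕ) + if j = k then v (j:ℕ) else 0) * y k
      = lapEntryT p m (j:ℕ) (k:ℕ) * y k + (if j = k then v (j:ℕ) * y k else 0) := by
    intro k; split_ifs <;> ring
  rw [Finset.sum_congr rfl (fun k _ => h2 k), Finset.sum_add_distrib,
    Finset.sum_ite_eq Finset.univ j (fun k => v (j:ℕ) * y k)]
  simp

/-- The solution vector at scale `n+1` built from the solution `u'` at scale `n`. -/
noncomputable def uVec {n : ℕ} (c : ℕ → ℝ) (u' : Fin (2^n) → ℝ) : Fin (2^(n+1)) → ℝ := fun m =>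
  (if (m:ℕ) % 2 = 0 then 1 - c ((m:ℕ)/2) else 1 + c ((m:ℕ)/2))
    * u' ⟨(m:ℕ)/2, by have := m.isLt; have h3 := pow_succ 2 n; omega⟩ / Real.sqrt 2

lemma uVec_pair0 {n : ℕ} (c : ℕ → ℝ) (u' : Fin (2^n) → ℝ) (k : Fin (2^n)) :
    uVec c u' (pairE n (k,0)) = (1 - c (k:ℕ)) * u' k / Real.sqrt 2 := by
  unfold uVec
  have hval : ((pairE n (k,(0:Fin 2)) : Fin (2^(n+1))) : ℕ) = 2*(k:ℕ) + 0 := pairE_val n k 0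
  have hidx : ∀ (h : (2*(k:ℕ)+0)/2 < 2^n), (⟨(2*(k:ℕ)+0)/2, h⟩ : Fin (2^n)) = k := by
    intro h; apply Fin.ext; show (2*(k:ℕ)+0)/2 = (k:ℕ); omega
  simp only [hval]
  rw [hidx, show (2*(k:ℕ)+0) % 2 = 0 from by omega,
    show (2*(k:ℕ)+0)/2 = (k:ℕ) from by omega]
  norm_num

lemma uVec_pair1 {n : ℕ} (c : ℕ → ℝ) (u' : Fin (2^n) → ℝ) (k : Fin (2^n)) :
    uVec c u' (pairE n (k,1)) = (1 + c (k:ℕ)) * u' k / Real.sqrt 2 := by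
  unfold uVec
  have hval : ((pairE n (k,(1:Fin 2)) : Fin (2^(n+1))) : ℕ) = 2*(k:ℕ) + 1 := pairE_val n k 1
  have hidx : ∀ (h : (2*(k:ℕ)+1)/2 < 2^n), (⟨(2*(k:ℕ)+1)/2, h⟩ : Fin (2^n)) = k := by
    intro h; apply Fin.ext; show (2*(k:ℕ)+1)/2 = (k:ℕ); omega
  simp only [hval]
  rw [hidx, show (2*(k:ℕ)+1) % 2 = 1 from by omega,
    show (2*(k:ℕ)+1)/2 = (k:ℕ) from by omega]
  norm_num

lemma keyLemma : ∀ (n : ℕ) (p v : ℕ → ℝ), PredGood p n v →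
    (HmatT p v n n).det ≠ 0 ∧ renIter p n v 0 ≠ 0 ∧
      phiVec n ⬝ᵥ (HmatT p v n n)⁻¹.mulVec (phiVec n) = (renIter p n v 0)⁻¹ := by
  intro n
  induction n with
  | zero =>
    intro p v hP
    have hv0 : v 0 ≠ 0 := hP.2
    have h1 : (2:ℕ)^0 = 1 := pow_zero 2
    haveI hUniq : Unique (Fin (2^0)) :=
      ⟨⟨⟨0, by omega⟩⟩, fun a => by apply Fin.ext; have := a.isLt; omega⟩
    have hphi : ∀ j : Fin (2^0), phiVec 0 j = 1 := by
      intro j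
      show (Real.sqrt (2^0))⁻¹ = 1
      norm_num
    have hH : ∀ j k : Fin (2^0), HmatT p v 0 0 j k = v 0 := by
      intro j k
      have hj0 : (j:ℕ) = 0 := by have := j.isLt; omega
      have hjk : j = k := Subsingleton.elim _ _
      show lapEntryT p 0 (j:ℕ) (k:ℕ) + (if j = k then v (j:ℕ) else 0) = v 0
      rw [if_pos hjk, hj0]
      simp [lapEntryT]
    have hdet : (HmatT p v 0 0).det ≠ 0 := by
      rw [Matrix.det_unique, hH]
      exact hv0
    have hu : (HmatT p v 0 0).mulVec (fun _ => (v 0)⁻¹) = phiVec 0 := by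
      funext j
      have : (HmatT p v 0 0).mulVec (fun _ => (v 0)⁻¹) j
          = ∑ k, HmatT p v 0 0 j k * (v 0)⁻¹ := by
        simp [Matrix.mulVec, dotProduct]
      rw [this, Fintype.sum_unique, hH, hphi]
      exact mul_inv_cancel₀ hv0
    refine ⟨hdet, hP.2, ?_⟩
    rw [inv_mulVec_eq' hdet hu]
    have hdp : phiVec 0 ⬝ᵥ (fun _ => (v 0)⁻¹) = ∑ j : Fin (2^0), phiVec 0 j * (v 0)⁻¹ := rfl
    rw [hdp, Fintype.sum_unique, hphi]
    rw [one_mul]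
    rfl
  | succ n ih =>
    intro p v hP
    have hpow : (2:ℕ)^(n+1) = 2^n * 2 := pow_succ 2 n
    have htop : ∀ k : ℕ, k < 2^n →
        v (2*k) ≠ 0 ∧ v (2*k+1) ≠ 0 ∧ v (2*k) + v (2*k+1) ≠ 0 := by
      intro k hk
      have hb : 2*k+1 < 2^(n+1-0) := by
        simp only [Nat.sub_zero]; omega
      exact hP.1 0 k (Nat.succ_pos n) hb
    have hPw : PredGood (shiftSeq p) n (renPotH p v) := by
      constructor
      · intro j k hj hk
        have hb : 2*k+1 < 2^(n+1-(j+1)) := by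
          have he : n+1-(j+1) = n - j := by omega
          rw [he]; exact hk
        have h := hP.1 (j+1) k (by omega) hb
        rwa [renIter_level' p j v (2*k), renIter_level' p j v (2*k+1)] at h
      · have h := hP.2
        rwa [renIter_level' p n v 0] at h
    obtain ⟨hdet', hr', hphi'⟩ := ih (shiftSeq p) (renPotH p v) hPw
    have hwk : ∀ k : ℕ, k < 2^n →
        renPotH p v k = 2 * v (2*k) * v (2*k+1) / (v (2*k) + v (2*k+1)) + p 1 := by
      intro k hk
      obtain ⟨ha, hb, hab⟩ := htop k hk
      unfold renPotH
      have h2 : 1/(2*v (2*k)) + 1/(2*v (2*k+1))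
          = (v (2*k) + v (2*k+1)) / (2 * v (2*k) * v (2*k+1)) := by
        field_simp; ring
      rw [h2, inv_div]
    -- determinant of the level-(n+1) Hamiltonian is nonzero
    have hdet : (HmatT p v (n+1) (n+1)).det ≠ 0 := by
      intro h0
      obtain ⟨x, hx0, hx⟩ := (Matrix.exists_mulVec_eq_zero_iff).2 h0
      have hdiff : ∀ j : Fin (2^n),
          v (2*(j:ℕ)) * x (pairE n (j,0)) = v (2*(j:ℕ)+1) * x (pairE n (j,1)) := by
        intro j
        have h0' := congrFun hx (pairE n (j,0))
        have h1' := congrFun hx (pairE n (j,1))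
        rw [mulVec_pair] at h0' h1'
        simp only [Pi.zero_apply, pairE_val, Fin.val_zero, Fin.val_one, add_zero] at h0' h1'
        linarith [h0', h1']
      have hsum : (HmatT (shiftSeq p) (renPotH p v) n n).mulVec
          (fun k => x (pairE n (k,0)) + x (pairE n (k,1))) = 0 := by
        funext j
        have h0' := congrFun hx (pairE n (j,0))
        have h1' := congrFun hx (pairE n (j,1))
        rw [mulVec_pair] at h0' h1'
        simp only [Pi.zero_apply, pairE_val, Fin.val_zero, Fin.val_one, add_zero] at h0' h1'
        obtain ⟨ha, hb, hab⟩ := htop (j:ℕ) j.isLt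
        have hd := hdiff j
        rw [HmatT_mulVec, Pi.zero_apply]
        have hterm : v (2*(j:ℕ)) * x (pairE n (j,0)) + v (2*(j:ℕ)+1) * x (pairE n (j,1))
            = (renPotH p v (j:ℕ) - p 1) * (x (pairE n (j,0)) + x (pairE n (j,1))) := by
          rw [hwk (j:ℕ) j.isLt, add_sub_cancel_right, div_mul_eq_mul_div, eq_div_iff hab]
          linear_combination (v (2*(j:ℕ)) - v (2*(j:ℕ)+1)) * hd
        linarith [h0', h1', hterm]
      have hy0 : (fun k : Fin (2^n) => x (pairE n (k,0)) + x (pairE n (k,1))) = 0 := by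
        have h1 := inv_mulVec_eq' hdet' hsum
        rw [Matrix.mulVec_zero] at h1
        exact h1.symm
      apply hx0
      funext m
      obtain ⟨⟨k, t⟩, rfl⟩ := (pairE n).surjective m
      have hyk : x (pairE n (k,0)) + x (pairE n (k,1)) = 0 := congrFun hy0 k
      obtain ⟨ha, hb, hab⟩ := htop (k:ℕ) k.isLt
      have hd := hdiff k
      have hx0' : x (pairE n (k,0)) = 0 := by
        have hz : (v (2*(k:ℕ)) + v (2*(k:ℕ)+1)) * x (pairE n (k,0)) = 0 := by
          linear_combination hd + v (2*(k:ℕ)+1) * hyk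
        rcases mul_eq_zero.1 hz with h | h
        · exact absurd h hab
        · exact h
      have hx1' : x (pairE n (k,1)) = 0 := by linarith [hyk, hx0']
      have ht2 := t.isLt
      rcases (by omega : (t:ℕ) = 0 ∨ (t:ℕ) = 1) with h | h
      · have : t = 0 := Fin.ext h
        rw [this, Pi.zero_apply]; exact hx0'
      · have : t = 1 := Fin.ext h
        rw [this, Pi.zero_apply]; exact hx1'
    -- the solution vector
    have hs2 : Real.sqrt 2 ≠ 0 := by positivity
    have hs2' : Real.sqrt 2 * Real.sqrt 2 = 2 := Real.mul_self_sqrt (by norm_num)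
    have hsq : Real.sqrt 2 ^ 2 = 2 := Real.sq_sqrt (by norm_num)
    have hsq4 : Real.sqrt 2 ^ 4 = 4 := by
      rw [show (4:ℕ) = 2*2 from rfl, pow_mul, hsq]; norm_num
    have hsn : Real.sqrt (2^n) ≠ 0 := by positivity
    have hsplit : Real.sqrt (2^(n+1)) = Real.sqrt (2^n) * Real.sqrt 2 := by
      rw [pow_succ, Real.sqrt_mul (by positivity)]
    have hdetU' : IsUnit (HmatT (shiftSeq p) (renPotH p v) n n).det := isUnit_iff_ne_zero.2 hdet'
    have hHu' : (HmatT (shiftSeq p) (renPotH p v) n n).mulVec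
        ((HmatT (shiftSeq p) (renPotH p v) n n)⁻¹.mulVec (phiVec n)) = phiVec n := by
      rw [Matrix.mulVec_mulVec, Matrix.mul_nonsing_inv _ hdetU', Matrix.one_mulVec]
    set u' : Fin (2^n) → ℝ := (HmatT (shiftSeq p) (renPotH p v) n n)⁻¹.mulVec (phiVec n) with hu'def
    set cc : ℕ → ℝ := fun k => (v (2*k) - v (2*k+1)) / (v (2*k) + v (2*k+1)) with hccdef
    have hLap : ∀ j : Fin (2^n), ∑ k : Fin (2^n), lapEntryT (shiftSeq p) n (j:ℕ) (k:ℕ) * u' k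
        = phiVec n j - renPotH p v (j:ℕ) * u' j := by
      intro j
      have h := congrFun hHu' j
      rw [HmatT_mulVec] at h
      linarith [h]
    have hHu : (HmatT p v (n+1) (n+1)).mulVec (uVec cc u') = phiVec (n+1) := by
      funext m
      obtain ⟨⟨j, s⟩, rfl⟩ := (pairE n).surjective m
      rw [mulVec_pair]
      have hsum2 : ∀ k : Fin (2^n),
          uVec cc u' (pairE n (k,0)) + uVec cc u' (pairE n (k,1))
            = 2 * u' k / Real.sqrt 2 := by
        intro k; rw [uVec_pair0, uVec_pair1]; ring
      rw [Finset.sum_congr rfl (fun k _ => by rw [hsum2 k]), hsum2 j]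
      have hpull : ∑ k : Fin (2^n), lapEntryT (shiftSeq p) n (j:ℕ) (k:ℕ) * (2 * u' k / Real.sqrt 2)
          = (∑ k : Fin (2^n), lapEntryT (shiftSeq p) n (j:ℕ) (k:ℕ) * u' k) * (2 / Real.sqrt 2) := by
        rw [Finset.sum_mul]
        exact Finset.sum_congr rfl (fun k _ => by ring)
      rw [hpull, hLap j]
      obtain ⟨ha, hb, hab⟩ := htop (j:ℕ) j.isLt
      have hphin : phiVec n j = (Real.sqrt (2^n))⁻¹ := rfl
      have hphin1 : phiVec (n+1) (pairE n (j,s)) = (Real.sqrt (2^(n+1)))⁻¹ := rfl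
      have hwj := hwk (j:ℕ) j.isLt
      have hs2'' : (2:ℝ)^n ≠ 0 := by positivity
      have ht2 := s.isLt
      rcases (by omega : (s:ℕ) = 0 ∨ (s:ℕ) = 1) with h | h
      · have hs0 : s = 0 := Fin.ext h
        subst hs0
        rw [uVec_pair0, pairE_val, hphin, hphin1, hsplit, hwj]
        simp only [Fin.val_zero, add_zero, hccdef]
        field_simp
        ring_nf
      · have hs1 : s = 1 := Fin.ext h
        subst hs1
        rw [uVec_pair1, pairE_val, hphin, hphin1, hsplit, hwj]
        simp only [Fin.val_one, hccdef]
        field_simp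
        ring_nf
    refine ⟨hdet, ?_, ?_⟩
    · rw [renIter_level' p n v 0]; exact hr'
    · rw [inv_mulVec_eq' hdet hHu, renIter_level' p n v 0]
      have hdp : phiVec (n+1) ⬝ᵥ uVec cc u'
          = ∑ m : Fin (2^(n+1)), phiVec (n+1) m * uVec cc u' m := rfl
      have hdp' : phiVec n ⬝ᵥ u' = ∑ k : Fin (2^n), phiVec n k * u' k := rfl
      rw [← hphi', hdp, hdp', sum_pairE]
      refine Finset.sum_congr rfl (fun k _ => ?_)
      have hphin : ∀ m, phiVec (n+1) m = (Real.sqrt (2^(n+1)))⁻¹ := fun m => rfl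
      have hphin' : phiVec n k = (Real.sqrt (2^n))⁻¹ := rfl
      simp only [hphin, hphin']
      rw [uVec_pair0, uVec_pair1, hsplit]
      field_simp
      ring_nf
      rw [hsq]

end KeyLemma2


section ProbAux

lemma HmatT_sub_smul (p v : ℕ → ℝ) (n m : ℕ) (E : ℝ) :
    HmatT p (fun i => v i - E) n m
      = HmatT p v n m - E • (1 : Matrix (Fin (2^n)) (Fin (2^n)) ℝ) := by
  ext j k
  rcases eq_or_ne j k with rfl | h
  · simp [HmatT, Matrix.sub_apply, Matrix.smul_apply, Matrix.one_apply]
    ring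
  · simp [HmatT, Matrix.sub_apply, Matrix.smul_apply, Matrix.one_apply, h]

lemma volume_preimage_moebius (x q : ℝ) (hx : x ≠ 0) {B : Set ℝ} (hB : MeasurableSet B)
    (hB0 : volume B = 0) :
    volume {y : ℝ | (1/(2*x) + 1/(2*y))⁻¹ + q ∈ B} = 0 := by
  set h : ℝ → ℝ := fun w => (w - q) * x / (2*x - (w - q)) with hhdef
  have hsub : {y : ℝ | (1/(2*x) + 1/(2*y))⁻¹ + q ∈ B}
      ⊆ ({0, -x} : Set ℝ) ∪ (h '' (B \ {2*x + q})) := by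
    intro y hy
    by_cases hy0 : y = 0
    · exact Or.inl (Or.inl hy0)
    by_cases hyx : y = -x
    · exact Or.inl (Or.inr hyx)
    right
    have hxy : x + y ≠ 0 := fun hc => hyx (by linarith)
    have hF : (1/(2*x) + 1/(2*y))⁻¹ + q = 2*x*y/(x+y) + q := by
      have h2 : 1/(2*x) + 1/(2*y) = (x + y) / (2*x*y) := by field_simp; ring
      rw [h2, inv_div]
    refine ⟨2*x*y/(x+y) + q, ⟨?_, ?_⟩, ?_⟩
    · rw [← hF]; exact hy
    · simp only [Set.mem_singleton_iff]
      intro hc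
      have h3 : 2*x*y/(x+y) = 2*x := by linarith
      have h4 : 2*x*y = 2*x*(x+y) := by
        rw [div_eq_iff hxy] at h3; linarith [h3]
      have h5 : x * x = 0 := by nlinarith [h4]
      exact hx (mul_self_eq_zero.1 h5)
    · show (2*x*y/(x+y) + q - q) * x / (2*x - (2*x*y/(x+y) + q - q)) = y
      have hwq : 2*x*y/(x+y) + q - q = 2*x*y/(x+y) := by ring
      rw [hwq]
      have hden : 2*x - 2*x*y/(x+y) = 2*x*x/(x+y) := by field_simp; ring
      rw [hden]
      have hden2 : 2*x*x/(x+y) ≠ 0 := div_ne_zero (by positivity) hxy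
      rw [div_eq_iff hden2]
      field_simp
  refine measure_mono_null hsub (measure_union_null ?_ ?_)
  · exact (((Set.finite_singleton (-x)).insert 0).countable).measure_zero _
  · have hmeas : MeasurableSet (B \ {2*x+q}) := hB.diff (measurableSet_singleton _)
    have h0 : volume (B \ {2*x+q}) = 0 := measure_mono_null Set.diff_subset hB0
    have hder : ∀ w ∈ B \ {2*x+q},
        HasFDerivWithinAt h
          (ContinuousLinearMap.smulRight (1 : ℝ →L[ℝ] ℝ)
            ((1 * x * (2*x - (w - q)) - (w - q) * x * (0 - 1)) / (2*x - (w - q))^2))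
          (B \ {2*x+q}) w := by
      intro w hw
      have hne : 2*x - (w - q) ≠ 0 := by
        intro hc
        exact hw.2 (by simp only [Set.mem_singleton_iff]; linarith)
      have hnum : HasDerivAt (fun w : ℝ => (w - q) * x) (1 * x) w :=
        ((hasDerivAt_id w).sub_const q).mul_const x
      have hden : HasDerivAt (fun w : ℝ => 2*x - (w - q)) (0 - 1) w :=
        (hasDerivAt_const w (2*x)).sub ((hasDerivAt_id w).sub_const q)
      exact ((hnum.div hden hne).hasFDerivAt).hasFDerivWithinAt
    refine le_antisymm ?_ zero_le
    calc volume (h '' (B \ {2*x+q}))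
        ≤ ∫⁻ w in B \ {2*x+q}, ENNReal.ofReal
            |(ContinuousLinearMap.smulRight (1 : ℝ →L[ℝ] ℝ)
              ((1 * x * (2*x - (w - q)) - (w - q) * x * (0 - 1)) / (2*x - (w - q))^2)).det| ∂volume :=
          MeasureTheory.addHaar_image_le_lintegral_abs_det_fderiv volume hmeas hder
      _ = 0 := setLIntegral_measure_zero _ _ h0

lemma map_step_ac {Ω : Type*} [MeasurableSpace Ω] (Pr : Measure Ω) [IsProbabilityMeasure Pr]
    {X Y : Ω → ℝ} (hX : Measurable X) (hY : Measurable Y) (hind : IndepFun X Y Pr)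
    (hXa : Measure.map X Pr ≪ volume) (hYa : Measure.map Y Pr ≪ volume) (q : ℝ) :
    Measure.map (fun ω => (1/(2*X ω) + 1/(2*Y ω))⁻¹ + q) Pr ≪ volume := by
  have hFm : Measurable (fun z : ℝ × ℝ => (1/(2*z.1) + 1/(2*z.2))⁻¹ + q) :=
    (((measurable_const.mul measurable_fst).const_div 1).add
      ((measurable_const.mul measurable_snd).const_div 1)).inv.add_const q
  have hGm : Measurable (fun ω => (1/(2*X ω) + 1/(2*Y ω))⁻¹ + q) :=
    hFm.comp (hX.prodMk hY)
  intro A hA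
  obtain ⟨B, hAB, hBm, hB0⟩ := exists_measurable_superset_of_null hA
  have hmain : Measure.map (fun ω => (1/(2*X ω) + 1/(2*Y ω))⁻¹ + q) Pr B = 0 := by
    rw [Measure.map_apply hGm hBm]
    have hpre : (fun ω => (1/(2*X ω) + 1/(2*Y ω))⁻¹ + q) ⁻¹' B
        = (fun ω => (X ω, Y ω)) ⁻¹'
          ((fun z : ℝ × ℝ => (1/(2*z.1) + 1/(2*z.2))⁻¹ + q) ⁻¹' B) := rfl
    rw [hpre, ← Measure.map_apply (hX.prodMk hY) (hFm hBm)]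
    rw [(indepFun_iff_map_prod_eq_prod_map_map hX.aemeasurable hY.aemeasurable).1 hind]
    rw [Measure.prod_apply (hFm hBm)]
    have hae : (fun x => (Measure.map Y Pr)
          (Prod.mk x ⁻¹' ((fun z : ℝ × ℝ => (1/(2*z.1) + 1/(2*z.2))⁻¹ + q) ⁻¹' B)))
        =ᵐ[Measure.map X Pr] (fun _ => 0) := by
      have hx0 : ∀ᵐ x ∂(Measure.map X Pr), x ≠ 0 := by
        refine (ae_iff).2 ?_
        have he : {x : ℝ | ¬ x ≠ 0} = {0} := by ext z; simp
        rw [he]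
        exact hXa Real.volume_singleton
      refine hx0.mono (fun x hx => ?_)
      show (Measure.map Y Pr)
        (Prod.mk x ⁻¹' ((fun z : ℝ × ℝ => (1/(2*z.1) + 1/(2*z.2))⁻¹ + q) ⁻¹' B)) = 0
      have hpre2 : Prod.mk x ⁻¹' ((fun z : ℝ × ℝ => (1/(2*z.1) + 1/(2*z.2))⁻¹ + q) ⁻¹' B)
          = {y : ℝ | (1/(2*x) + 1/(2*y))⁻¹ + q ∈ B} := rfl
      rw [hpre2]
      exact hYa (volume_preimage_moebius x q hx hBm hB0)
    rw [lintegral_congr_ae hae, lintegral_zero]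
  exact le_antisymm ((measure_mono hAB).trans hmain.le) zero_le

lemma indep_sum_zero {Ω : Type*} [MeasurableSpace Ω] (Pr : Measure Ω) [IsProbabilityMeasure Pr]
    {X Y : Ω → ℝ} (hX : Measurable X) (hY : Measurable Y) (hind : IndepFun X Y Pr)
    (hYa : Measure.map Y Pr ≪ volume) :
    Pr {ω | X ω + Y ω = 0} = 0 := by
  have hSm : MeasurableSet {z : ℝ × ℝ | z.1 + z.2 = 0} :=
    (measurable_fst.add measurable_snd) (measurableSet_singleton 0)
  have hpre : {ω | X ω + Y ω = 0} = (fun ω => (X ω, Y ω)) ⁻¹' {z : ℝ × ℝ | z.1 + z.2 = 0} := rfl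
  rw [hpre, ← Measure.map_apply (hX.prodMk hY) hSm,
    (indepFun_iff_map_prod_eq_prod_map_map hX.aemeasurable hY.aemeasurable).1 hind,
    Measure.prod_apply hSm]
  have hzero : ∀ x : ℝ, (Measure.map Y Pr) (Prod.mk x ⁻¹' {z : ℝ × ℝ | z.1 + z.2 = 0}) = 0 := by
    intro x
    have he : Prod.mk x ⁻¹' {z : ℝ × ℝ | z.1 + z.2 = 0} = {-x} := by
      ext y; simp [Set.mem_setOf_eq]; constructor <;> intro h <;> linarith
    rw [he]
    exact hYa Real.volume_singleton
  rw [lintegral_congr (fun x => hzero x), lintegral_zero]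

end ProbAux


section BlockLemmas

lemma blockG_meas (p : ℕ → ℝ) (E : ℝ) (j m : ℕ) (Q : Finset ℕ) :
    Measurable (fun t : ({x // x ∈ Q} → ℝ) => renIter p j
      (fun i => (if h : m*2^j + i ∈ Q then t ⟨m*2^j + i, h⟩ else 0) - E) 0) := by
  apply (renIter_measurable' p j 0).comp
  apply measurable_pi_lambda
  intro i
  by_cases h : m*2^j + i ∈ Q
  · simp only [dif_pos h]
    exact (measurable_pi_apply _).sub measurable_const
  · simp only [dif_neg h]
    exact measurable_const

lemma blockG_eq {Ω : Type*} (V : ℕ → Ω → ℝ) (p : ℕ → ℝ) (E : ℝ) (j m : ℕ) (ω : Ω) :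
    renIter p j (fun i => V i ω - E) m
      = renIter p j (fun i => (if h : m*2^j + i ∈ Finset.Ico (m*2^j) ((m+1)*2^j)
          then V (m*2^j + i) ω else 0) - E) 0 := by
  rw [renIter_shift' p j _ m]
  apply renIter_congr0'
  intro i hi
  have hmul : (m+1)*2^j = m*2^j + 2^j := by ring
  have hmem : m*2^j + i ∈ Finset.Ico (m*2^j) ((m+1)*2^j) := by
    rw [Finset.mem_Ico]; omega
  rw [dif_pos hmem]

end BlockLemmas

/-- **Distribution of `Φ_n(E)`** (Corollary in Section 3): almost surely `H_{n,n} - E`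
is invertible with `⟨φ_n, (H_{n,n}-E)^{-1} φ_n⟩ ≠ 0`, and
`Φ_n(E) = ⟨φ_n, (H_{n,n}-E)^{-1} φ_n⟩^{-1}` has the same law as the output `W^{(n)}_0` of
the renormalization recursion applied to `2^n` i.i.d. copies of `V - E`; in particular its
law is absolutely continuous (with density `T_{p_n} ⋯ T_{p_1} ρ_E`). -/
theorem phi_distribution
    {Ω : Type*} [MeasurableSpace Ω] (Pr : Measure Ω) [IsProbabilityMeasure Pr]
    (p : ℕ → ℝ) (hps : Summable p)
    (V : ℕ → Ω → ℝ) (hVmeas : ∀ k, Measurable (V k))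
    (hViid : iIndepFun V Pr)
    (ρ : ℝ → ℝ) (hρpos : ∀ v, 0 ≤ ρ v)
    (hρ : ∀ k, Measure.map (V k) Pr = volume.withDensity fun v => ENNReal.ofReal (ρ v))
    (hρbd : ∃ M : ℝ, ∀ v, ρ v ≤ M)
    (n : ℕ) (hn : 1 ≤ n) (E : ℝ) :
    (∀ᵐ ω ∂Pr,
        IsUnit (HmatT p (fun i => V i ω) n n - E • (1 : Matrix (Fin (2 ^ n)) (Fin (2 ^ n)) ℝ)).det ∧
        phiVec n ⬝ᵥ
          (HmatT p (fun i => V i ω) n n - E • (1 : Matrix (Fin (2 ^ n)) (Fin (2 ^ n)) ℝ))⁻¹.mulVec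
            (phiVec n) ≠ 0) ∧
    Measure.map (fun ω => (phiVec n ⬝ᵥ
        (HmatT p (fun i => V i ω) n n - E • (1 : Matrix (Fin (2 ^ n)) (Fin (2 ^ n)) ℝ))⁻¹.mulVec
          (phiVec n))⁻¹) Pr =
      Measure.map (fun ω => renIter p n (fun k => V k ω - E) 0) Pr ∧
    Measure.map (fun ω => (phiVec n ⬝ᵥ
        (HmatT p (fun i => V i ω) n n - E • (1 : Matrix (Fin (2 ^ n)) (Fin (2 ^ n)) ℝ))⁻¹.mulVec
          (phiVec n))⁻¹) Pr ≪ volume := by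
  classical
  -- measurability of the renormalized potentials
  have hXm : ∀ i : ℕ, Measurable (fun ω => V i ω - E) := fun i => (hVmeas i).sub measurable_const
  have hWm : ∀ j k : ℕ, Measurable (fun ω => renIter p j (fun i => V i ω - E) k) := by
    intro j k
    exact (renIter_measurable' p j k).comp (measurable_pi_lambda _ (fun i => hXm i))
  -- independence of sibling renormalized potentials
  have hblock : ∀ j k : ℕ,
      IndepFun (fun ω => renIter p j (fun i => V i ω - E) (2*k))
               (fun ω => renIter p j (fun i => V i ω - E) (2*k+1)) Pr := by
    intro j k
    have hST : Disjoint (Finset.Ico ((2*k)*2^j) ((2*k+1)*2^j))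
        (Finset.Ico ((2*k+1)*2^j) ((2*k+1+1)*2^j)) :=
      Finset.Ico_disjoint_Ico_consecutive _ _ _
    have base := hViid.indepFun_finset _ _ hST hVmeas
    have hcomp := base.comp
      (blockG_meas p E j (2*k) (Finset.Ico ((2*k)*2^j) ((2*k+1)*2^j)))
      (blockG_meas p E j (2*k+1) (Finset.Ico ((2*k+1)*2^j) ((2*k+1+1)*2^j)))
    have e1 : (fun t : ({x // x ∈ Finset.Ico ((2*k)*2^j) ((2*k+1)*2^j)} → ℝ) => renIter p j
          (fun i => (if h : (2*k)*2^j + i ∈ Finset.Ico ((2*k)*2^j) ((2*k+1)*2^j)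
            then t ⟨(2*k)*2^j + i, h⟩ else 0) - E) 0)
          ∘ (fun ω (i : {x // x ∈ Finset.Ico ((2*k)*2^j) ((2*k+1)*2^j)}) => V i ω)
        = fun ω => renIter p j (fun i => V i ω - E) (2*k) := by
      funext ω
      exact (blockG_eq V p E j (2*k) ω).symm
    have e2 : (fun t : ({x // x ∈ Finset.Ico ((2*k+1)*2^j) ((2*k+1+1)*2^j)} → ℝ) => renIter p j
          (fun i => (if h : (2*k+1)*2^j + i ∈ Finset.Ico ((2*k+1)*2^j) ((2*k+1+1)*2^j)
            then t ⟨(2*k+1)*2^j + i, h⟩ else 0) - E) 0)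
          ∘ (fun ω (i : {x // x ∈ Finset.Ico ((2*k+1)*2^j) ((2*k+1+1)*2^j)}) => V i ω)
        = fun ω => renIter p j (fun i => V i ω - E) (2*k+1) := by
      funext ω
      exact (blockG_eq V p E j (2*k+1) ω).symm
    rw [e1, e2] at hcomp
    exact hcomp
  -- absolute continuity of the laws of the renormalized potentials
  have hWac : ∀ j k : ℕ,
      Measure.map (fun ω => renIter p j (fun i => V i ω - E) k) Pr ≪ volume := by
    intro j
    induction j with
    | zero =>
      intro k
      show Measure.map (fun ω => V k ω - E) Pr ≪ volume
      have hgE : Measurable (fun x : ℝ => x - E) := measurable_id.sub_const E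
      have hc : (fun ω => V k ω - E) = (fun x : ℝ => x - E) ∘ V k := rfl
      rw [hc, ← Measure.map_map hgE (hVmeas k), hρ k]
      have hmp : Measure.map (fun x : ℝ => x - E) volume = volume :=
        (measurePreserving_sub_right volume E).map_eq
      have := (withDensity_absolutelyContinuous volume
          (fun v => ENNReal.ofReal (ρ v))).map hgE
      rwa [hmp] at this
    | succ j ihj =>
      intro k
      show Measure.map (fun ω => (1/(2 * renIter p j (fun i => V i ω - E) (2*k))
          + 1/(2 * renIter p j (fun i => V i ω - E) (2*k+1)))⁻¹ + p (j+1)) Pr ≪ volume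
      exact map_step_ac Pr (hWm j (2*k)) (hWm j (2*k+1)) (hblock j k)
        (ihj (2*k)) (ihj (2*k+1)) (p (j+1))
  -- almost sure genericity
  have hsingle : ∀ j k : ℕ, ∀ᵐ ω ∂Pr, renIter p j (fun i => V i ω - E) k ≠ 0 := by
    intro j k
    rw [ae_iff]
    have he : {ω | ¬ renIter p j (fun i => V i ω - E) k ≠ 0}
        = (fun ω => renIter p j (fun i => V i ω - E) k) ⁻¹' {0} := by
      ext ω; simp
    rw [he, ← Measure.map_apply (hWm j k) (measurableSet_singleton 0)]
    exact hWac j k Real.volume_singleton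
  have hpair : ∀ j k : ℕ, ∀ᵐ ω ∂Pr,
      renIter p j (fun i => V i ω - E) (2*k) ≠ 0 ∧
      renIter p j (fun i => V i ω - E) (2*k+1) ≠ 0 ∧
      renIter p j (fun i => V i ω - E) (2*k) + renIter p j (fun i => V i ω - E) (2*k+1) ≠ 0 := by
    intro j k
    have h3 : ∀ᵐ ω ∂Pr, renIter p j (fun i => V i ω - E) (2*k)
        + renIter p j (fun i => V i ω - E) (2*k+1) ≠ 0 := by
      rw [ae_iff]
      have he : {ω | ¬ (renIter p j (fun i => V i ω - E) (2*k)
          + renIter p j (fun i => V i ω - E) (2*k+1) ≠ 0)}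
          = {ω | renIter p j (fun i => V i ω - E) (2*k)
            + renIter p j (fun i => V i ω - E) (2*k+1) = 0} := by
        ext ω; simp
      rw [he]
      exact indep_sum_zero Pr (hWm j (2*k)) (hWm j (2*k+1)) (hblock j k) (hWac j (2*k+1))
    exact ((hsingle j (2*k)).and ((hsingle j (2*k+1)).and h3)).mono
      (fun ω h => ⟨h.1, h.2.1, h.2.2⟩)
  have hPred : ∀ᵐ ω ∂Pr, PredGood p n (fun i => V i ω - E) := by
    have hall : ∀ᵐ ω ∂Pr, ∀ j k : ℕ,
        renIter p j (fun i => V i ω - E) (2*k) ≠ 0 ∧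
        renIter p j (fun i => V i ω - E) (2*k+1) ≠ 0 ∧
        renIter p j (fun i => V i ω - E) (2*k)
          + renIter p j (fun i => V i ω - E) (2*k+1) ≠ 0 :=
      ae_all_iff.2 fun j => ae_all_iff.2 fun k => hpair j k
    exact (hall.and (hsingle n 0)).mono fun ω h =>
      ⟨fun j k _ _ => h.1 j k, h.2⟩
  -- apply the deterministic key lemma
  have hkey : ∀ᵐ ω ∂Pr,
      (HmatT p (fun i => V i ω) n n - E • (1 : Matrix (Fin (2^n)) (Fin (2^n)) ℝ)).det ≠ 0 ∧
      phiVec n ⬝ᵥ (HmatT p (fun i => V i ω) n n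
        - E • (1 : Matrix (Fin (2^n)) (Fin (2^n)) ℝ))⁻¹.mulVec (phiVec n)
        = (renIter p n (fun i => V i ω - E) 0)⁻¹ ∧
      renIter p n (fun i => V i ω - E) 0 ≠ 0 := by
    refine hPred.mono fun ω hP => ?_
    have hk := keyLemma n p (fun i => V i ω - E) hP
    rw [HmatT_sub_smul p (fun i => V i ω) n n E] at hk
    exact ⟨hk.1, hk.2.2, hk.2.1⟩
  have hcong : (fun ω => (phiVec n ⬝ᵥ
      (HmatT p (fun i => V i ω) n n
        - E • (1 : Matrix (Fin (2^n)) (Fin (2^n)) ℝ))⁻¹.mulVec (phiVec n))⁻¹)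
      =ᵐ[Pr] (fun ω => renIter p n (fun k => V k ω - E) 0) := by
    refine hkey.mono fun ω h => ?_
    show (phiVec n ⬝ᵥ (HmatT p (fun i => V i ω) n n
        - E • (1 : Matrix (Fin (2^n)) (Fin (2^n)) ℝ))⁻¹.mulVec (phiVec n))⁻¹
      = renIter p n (fun k => V k ω - E) 0
    rw [h.2.1, inv_inv]
  refine ⟨?_, ?_, ?_⟩
  · refine hkey.mono fun ω h => ?_
    exact ⟨isUnit_iff_ne_zero.2 h.1, by rw [h.2.1]; exact inv_ne_zero h.2.2⟩
  · exact Measure.map_congr hcong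
  · rw [Measure.map_congr hcong]
    exact hWac n 0
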